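/- Let V = (ℤ/2ℤ)³, an 8-element set, and let AGL(3,2) be the subgroup of the symmetric group on V consisting of all invertible affine transformations v ↦ L(v) + b with L ∈ GL(3, ℤ/2ℤ) and b ∈ V. Then AGL(3,2) has order 1344, every element of AGL(3,2) is an even permutation of V, and AGL(3,2) is a maximal subgroup of the alternating group on V (which has order 20160). -/

import Mathlib

/-- The elementary abelian group `(ℤ/2ℤ)³`, an 8-element set. -/
abbrev V : Type := ZMod 2 × ZMod 2 × ZMod 2

/-- The invertible affine transformations `v ↦ L v + b` of `V`,
as a set of permutations of `V`. -/
def affSet : Set (Equiv.Perm V) :=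
  {f | ∃ (L : V →ₗ[ZMod 2] V) (b : V), Function.Bijective L ∧ ∀ v, f v = L v + b}

namespace AffAux

open Equiv Equiv.Perm

def mkL (abc : V × V × V) (v : V) : V :=
  (if v.1 = 1 then abc.1 else 0) + (if v.2.1 = 1 then abc.2.1 else 0) +
    (if v.2.2 = 1 then abc.2.2 else 0)

set_option maxRecDepth 10000

lemma ite_add : ∀ (a : V) (x y : ZMod 2),
    (if x + y = 1 then a else 0) = (if x = 1 then a else 0) + (if y = 1 then a else 0) := by
  decide

lemma mkL_add (abc : V × V × V) (u v : V) : mkL abc (u + v) = mkL abc u + mkL abc v := by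
  show (if (u + v).1 = 1 then _ else _) + _ + _ = _
  simp only [mkL, Prod.fst_add, Prod.snd_add, ite_add]
  abel

lemma mkL_zero : ∀ abc : V × V × V, mkL abc 0 = 0 := by decide

lemma zmod2_cases : ∀ c : ZMod 2, c = 0 ∨ c = 1 := by decide

lemma mkL_smul (abc : V × V × V) (c : ZMod 2) (v : V) : mkL abc (c • v) = c • mkL abc v := by
  rcases zmod2_cases c with h | h <;> subst h
  · simp [mkL_zero]
  · simp

def mkLin (abc : V × V × V) : V →ₗ[ZMod 2] V where
  toFun := mkL abc
  map_add' := mkL_add abc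
  map_smul' := mkL_smul abc

lemma add_self : ∀ v : V, v + v = 0 := by decide

lemma bijective_of (abc : V × V × V) (h : ∀ v, mkL abc v = 0 → v = 0) :
    Function.Bijective (mkL abc) := by
  refine Finite.injective_iff_bijective.mp ?_
  intro u v huv
  have h0 : mkL abc (u + v) = 0 := by rw [mkL_add, huv, add_self]
  have h2 := h _ h0
  calc u = u + v + v := by rw [add_assoc, add_self, add_zero]
  _ = 0 + v := by rw [h2]
  _ = v := zero_add v

lemma expand : ∀ v : V, v = v.1 • (((1 : ZMod 2), (0 : ZMod 2), (0 : ZMod 2)) : V) +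
    v.2.1 • (((0 : ZMod 2), (1 : ZMod 2), (0 : ZMod 2)) : V) +
    v.2.2 • (((0 : ZMod 2), (0 : ZMod 2), (1 : ZMod 2)) : V) := by decide

lemma ite_smul' : ∀ (x : ZMod 2) (a : V), (if x = 1 then a else 0) = x • a := by decide

lemma mkL_eq_linear (L : V →ₗ[ZMod 2] V) :
    mkL (L (1, 0, 0), L (0, 1, 0), L (0, 0, 1)) = ⇑L := by
  funext v
  calc mkL (L (1, 0, 0), L (0, 1, 0), L (0, 0, 1)) v
      = v.1 • L (1, 0, 0) + v.2.1 • L (0, 1, 0) + v.2.2 • L (0, 0, 1) := by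
        simp [mkL, ite_smul']
  _ = L (v.1 • (((1 : ZMod 2), (0 : ZMod 2), (0 : ZMod 2)) : V) +
        v.2.1 • (((0 : ZMod 2), (1 : ZMod 2), (0 : ZMod 2)) : V) +
        v.2.2 • (((0 : ZMod 2), (0 : ZMod 2), (1 : ZMod 2)) : V)) := by
        rw [map_add, map_add, map_smul, map_smul, map_smul]
  _ = L v := by rw [← expand v]

/-- The subgroup of affine transformations. -/
def A : Subgroup (Equiv.Perm V) where
  carrier := affSet
  one_mem' := ⟨LinearMap.id, 0, Function.bijective_id, fun v => by simp⟩
  mul_mem' := by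
    rintro f g ⟨L1, b1, h1, hf⟩ ⟨L2, b2, h2, hg⟩
    refine ⟨L1.comp L2, L1 b2 + b1, h1.comp h2, fun v => ?_⟩
    rw [Equiv.Perm.mul_apply, hf, hg, map_add, LinearMap.comp_apply, add_assoc]
  inv_mem' := by
    rintro f ⟨L, b, hL, hf⟩
    let e := LinearEquiv.ofBijective L hL
    refine ⟨e.symm.toLinearMap, e.symm b, e.symm.bijective, fun v => ?_⟩
    have key : f (e.symm v + e.symm b) = v := by
      rw [hf, show L (e.symm v + e.symm b) = e (e.symm v + e.symm b) from rfl, map_add]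
      simp only [LinearEquiv.apply_symm_apply]
      rw [add_assoc, add_self, add_zero]
    calc f⁻¹ v = f⁻¹ (f (e.symm v + e.symm b)) := by rw [key]
    _ = _ := Equiv.symm_apply_apply f _

def T : Type := {abc : V × V × V // Function.Bijective (mkL abc)}

noncomputable def g (x : T × V) : Equiv.Perm V :=
  Equiv.ofBijective (fun v => mkL x.1.1 v + x.2)
    ((Equiv.addRight x.2).bijective.comp x.1.2)

lemma g_apply (x : T × V) (v : V) : g x v = mkL x.1.1 v + x.2 := rfl

lemma range_g : Set.range g = affSet := by
  ext f
  constructor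
  · rintro ⟨x, rfl⟩
    exact ⟨mkLin x.1.1, x.2, x.1.2, fun v => rfl⟩
  · rintro ⟨L, b, hL, hf⟩
    refine ⟨⟨⟨(L (1, 0, 0), L (0, 1, 0), L (0, 0, 1)), ?_⟩, b⟩, ?_⟩
    · rw [mkL_eq_linear]; exact hL
    · refine Equiv.ext fun v => ?_
      rw [g_apply]
      show mkL (L (1, 0, 0), L (0, 1, 0), L (0, 0, 1)) v + b = f v
      rw [mkL_eq_linear, hf]

lemma mkL_e1 : ∀ abc : V × V × V, mkL abc (1, 0, 0) = abc.1 := by decide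
lemma mkL_e2 : ∀ abc : V × V × V, mkL abc (0, 1, 0) = abc.2.1 := by decide
lemma mkL_e3 : ∀ abc : V × V × V, mkL abc (0, 0, 1) = abc.2.2 := by decide

lemma g_injective : Function.Injective g := by
  intro x y h
  have hv : ∀ v, mkL x.1.1 v + x.2 = mkL y.1.1 v + y.2 := fun v => by
    rw [← g_apply, ← g_apply, h]
  have hb : x.2 = y.2 := by have := hv 0; rwa [mkL_zero, mkL_zero, zero_add, zero_add] at this
  have h1 : x.1.1.1 = y.1.1.1 := by
    have := hv (1, 0, 0); rwa [mkL_e1, mkL_e1, hb, add_left_inj] at this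
  have h2 : x.1.1.2.1 = y.1.1.2.1 := by
    have := hv (0, 1, 0); rwa [mkL_e2, mkL_e2, hb, add_left_inj] at this
  have h3 : x.1.1.2.2 = y.1.1.2.2 := by
    have := hv (0, 0, 1); rwa [mkL_e3, mkL_e3, hb, add_left_inj] at this
  have : x.1.1 = y.1.1 := Prod.ext h1 (Prod.ext h2 h3)
  exact Prod.ext (Subtype.ext this) hb

set_option maxRecDepth 10000 in
lemma count168 :
    (Finset.univ.filter (fun abc : V × V × V => ∀ v, mkL abc v = 0 → v = 0)).card = 168 := by
  decide

lemma card_T : Nat.card T = 168 := by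
  have hiff : ∀ abc : V × V × V,
      Function.Bijective (mkL abc) ↔ ∀ v, mkL abc v = 0 → v = 0 := fun abc =>
    ⟨fun hb v hv => hb.1 (by rw [hv, mkL_zero]), bijective_of abc⟩
  rw [show T = {abc : V × V × V // Function.Bijective (mkL abc)} from rfl]
  rw [Nat.card_eq_fintype_card, Fintype.card_subtype]
  rw [Finset.filter_congr (fun x _ => hiff x), count168]

lemma card_affSet : Nat.card affSet = 1344 := by
  rw [← range_g, Nat.card_range_of_injective g_injective, Nat.card_prod, card_T]
  have : Nat.card V = 8 := by rw [Nat.card_eq_fintype_card]; decide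
  rw [this]

lemma card_A : Nat.card A = 1344 := by
  have : ((A : Set (Equiv.Perm V))) = affSet := rfl
  rw [show (Nat.card A) = Nat.card affSet from Nat.card_congr (Equiv.setCongr this)]
  exact card_affSet

lemma sign_addRight : ∀ b : V, Equiv.Perm.sign (Equiv.addRight b) = 1 := by decide

set_option maxRecDepth 100000 in
set_option maxHeartbeats 4000000 in
lemma sign_mkL : ∀ abc : V × V × V, ∀ h : Function.Bijective (mkL abc),
    Equiv.Perm.sign (⟨mkL abc, Fintype.bijInv h, Fintype.leftInverse_bijInv h,
      Fintype.rightInverse_bijInv h⟩ : Equiv.Perm V) = 1 := by decide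

lemma sign_aff : ∀ f ∈ affSet, Equiv.Perm.sign f = 1 := by
  rintro f ⟨L, b, hL, hf⟩
  have hb : Function.Bijective (mkL (L (1, 0, 0), L (0, 1, 0), L (0, 0, 1))) := by
    rw [mkL_eq_linear]; exact hL
  set P : Equiv.Perm V := ⟨mkL (L (1, 0, 0), L (0, 1, 0), L (0, 0, 1)), Fintype.bijInv hb,
    Fintype.leftInverse_bijInv hb, Fintype.rightInverse_bijInv hb⟩ with hP
  have hfP : f = Equiv.addRight b * P := by
    refine Equiv.ext fun v => ?_
    rw [Equiv.Perm.mul_apply, hf v]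
    show L v + b = mkL (L (1, 0, 0), L (0, 1, 0), L (0, 0, 1)) v + b
    rw [mkL_eq_linear]
  rw [hfP, map_mul, sign_addRight, sign_mkL _ hb, one_mul]

end AffAux

namespace AffAux

open Equiv Equiv.Perm

def c1f : V → V := fun v => if v = ((0:ZMod 2),(0:ZMod 2),(0:ZMod 2)) then ((1:ZMod 2),(0:ZMod 2),(0:ZMod 2)) else if v = ((1:ZMod 2),(0:ZMod 2),(0:ZMod 2)) then ((0:ZMod 2),(1:ZMod 2),(0:ZMod 2)) else if v = ((0:ZMod 2),(1:ZMod 2),(0:ZMod 2)) then ((1:ZMod 2),(1:ZMod 2),(0:ZMod 2)) else if v = ((1:ZMod 2),(1:ZMod 2),(0:ZMod 2)) then ((0:ZMod 2),(0:ZMod 2),(1:ZMod 2)) else if v = ((0:ZMod 2),(0:ZMod 2),(1:ZMod 2)) then ((1:ZMod 2),(0:ZMod 2),(1:ZMod 2)) else if v = ((1:ZMod 2),(0:ZMod 2),(1:ZMod 2)) then ((0:ZMod 2),(1:ZMod 2),(1:ZMod 2)) else if v = ((0:ZMod 2),(1:ZMod 2),(1:ZMod 2)) then ((0:ZMod 2),(0:ZMod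 2),(0:ZMod 2)) else ((1:ZMod 2),(1:ZMod 2),(1:ZMod 2))
def c1g : V → V := fun v => if v = ((0:ZMod 2),(0:ZMod 2),(0:ZMod 2)) then ((0:ZMod 2),(1:ZMod 2),(1:ZMod 2)) else if v = ((1:ZMod 2),(0:ZMod 2),(0:ZMod 2)) then ((0:ZMod 2),(0:ZMod 2),(0:ZMod 2)) else if v = ((0:ZMod 2),(1:ZMod 2),(0:ZMod 2)) then ((1:ZMod 2),(0:ZMod 2),(0:ZMod 2)) else if v = ((1:ZMod 2),(1:ZMod 2),(0:ZMod 2)) then ((0:ZMod 2),(1:ZMod 2),(0:ZMod 2)) else if v = ((0:ZMod 2),(0:ZMod 2),(1:ZMod 2)) then ((1:ZMod 2),(1:ZMod 2),(0:ZMod 2)) else if v = ((1:ZMod 2),(0:ZMod 2),(1:ZMod 2)) then ((0:ZMod 2),(0:ZMod 2),(1:ZMod 2)) else if v = ((0:ZMod 2),(1:ZMod 2),(1:ZMod 2)) then ((1:ZMod 2),(0:ZMod 2),(1:ZMod 2)) else ((1:ZMod 2),(1:ZMod 2),(1:ZMod 2))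
def c1 : Equiv.Perm V := ⟨c1f, c1g, by decide, by decide⟩
def c2f : V → V := fun v => if v = ((0:ZMod 2),(0:ZMod 2),(0:ZMod 2)) then ((0:ZMod 2),(0:ZMod 2),(0:ZMod 2)) else if v = ((1:ZMod 2),(0:ZMod 2),(0:ZMod 2)) then ((1:ZMod 2),(1:ZMod 2),(1:ZMod 2)) else if v = ((0:ZMod 2),(1:ZMod 2),(0:ZMod 2)) then ((1:ZMod 2),(0:ZMod 2),(0:ZMod 2)) else if v = ((1:ZMod 2),(1:ZMod 2),(0:ZMod 2)) then ((0:ZMod 2),(1:ZMod 2),(0:ZMod 2)) else if v = ((0:ZMod 2),(0:ZMod 2),(1:ZMod 2)) then ((1:ZMod 2),(1:ZMod 2),(0:ZMod 2)) else if v = ((1:ZMod 2),(0:ZMod 2),(1:ZMod 2)) then ((0:ZMod 2),(0:ZMod 2),(1:ZMod 2)) else if v = ((0:ZMod 2),(1:ZMod 2),(1:ZMod 2)) then ((1:ZMod 2),(0:ZMod 2),(1:ZMod 2)) else ((0:ZMod 2),(1:ZMod 2),(1:ZMod 2))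
def c2g : V → V := fun v => if v = ((0:ZMod 2),(0:ZMod 2),(0:ZMod 2)) then ((0:ZMod 2),(0:ZMod 2),(0:ZMod 2)) else if v = ((1:ZMod 2),(0:ZMod 2),(0:ZMod 2)) then ((0:ZMod 2),(1:ZMod 2),(0:ZMod 2)) else if v = ((0:ZMod 2),(1:ZMod 2),(0:ZMod 2)) then ((1:ZMod 2),(1:ZMod 2),(0:ZMod 2)) else if v = ((1:ZMod 2),(1:ZMod 2),(0:ZMod 2)) then ((0:ZMod 2),(0:ZMod 2),(1:ZMod 2)) else if v = ((0:ZMod 2),(0:ZMod 2),(1:ZMod 2)) then ((1:ZMod 2),(0:ZMod 2),(1:ZMod 2)) else if v = ((1:ZMod 2),(0:ZMod 2),(1:ZMod 2)) then ((0:ZMod 2),(1:ZMod 2),(1:ZMod 2)) else if v = ((0:ZMod 2),(1:ZMod 2),(1:ZMod 2)) then ((1:ZMod 2),(1:ZMod 2),(1:ZMod 2)) else ((1:ZMod 2),(0:ZMod 2),(0:ZMod 2))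
def c2 : Equiv.Perm V := ⟨c2f, c2g, by decide, by decide⟩

lemma c1_pow : c1 ^ 7 = 1 := by decide
lemma c2_pow : c2 ^ 7 = 1 := by decide
lemma c1_sign : Equiv.Perm.sign c1 = 1 := by decide
lemma c2_sign : Equiv.Perm.sign c2 = 1 := by decide
lemma c12_threeCycle : Equiv.Perm.IsThreeCycle (c1 * c2) :=
  card_support_eq_three_iff.mp (by decide)

lemma card_V : Fintype.card V = 8 := by decide

lemma cardAlt : Nat.card (alternatingGroup V) = 20160 := by
  have h2 := @two_mul_card_alternatingGroup V _ _ _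
  have h3 : Fintype.card (Equiv.Perm V) = 40320 := by
    rw [Fintype.card_perm, card_V]
    decide
  rw [h3] at h2
  rw [Nat.card_eq_fintype_card]
  omega

lemma no_mid (K : Subgroup (Equiv.Perm V)) (hK : K ≤ alternatingGroup V)
    (hq : Nat.card K = 4032 ∨ Nat.card K = 6720) : False := by
  set G := alternatingGroup V with hG
  set K' : Subgroup G := K.subgroupOf G with hK'def
  have hK' : Nat.card K' = Nat.card K :=
    Nat.card_congr (Subgroup.subgroupOfEquivOfLe hK).toEquiv
  have hquot : Nat.card G = Nat.card (G ⧸ K') * Nat.card K' :=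
    Subgroup.card_eq_card_quotient_mul_card_subgroup K'
  rw [cardAlt, hK'] at hquot
  have hq' : Nat.card (G ⧸ K') = 5 ∨ Nat.card (G ⧸ K') = 3 := by
    rcases hq with h | h
    · left; rw [h] at hquot; omega
    · right; rw [h] at hquot; omega
  have hcardP : Nat.card (Equiv.Perm (G ⧸ K')) = (Nat.card (G ⧸ K')).factorial := by
    letI : DecidableEq (G ⧸ K') := Classical.decEq _
    letI : Fintype (G ⧸ K') := Fintype.ofFinite _
    rw [Nat.card_eq_fintype_card, Nat.card_eq_fintype_card, Fintype.card_perm]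
  set φ := MulAction.toPermHom G (G ⧸ K') with hφ
  have key : ∀ g : G, g ^ 7 = 1 → g ∈ φ.ker := by
    intro g hg
    have h1 : orderOf (φ g) ∣ 7 := orderOf_dvd_of_pow_eq_one (by rw [← map_pow, hg, map_one])
    have h2 : orderOf (φ g) ∣ (Nat.card (G ⧸ K')).factorial :=
      hcardP ▸ orderOf_dvd_natCard _
    have hd : orderOf (φ g) ∣ 1 := by
      rcases hq' with h | h <;> rw [h] at h2
      · have hg5 : Nat.gcd 7 (Nat.factorial 5) = 1 := by decide
        exact hg5 ▸ Nat.dvd_gcd h1 h2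
      · have hg3 : Nat.gcd 7 (Nat.factorial 3) = 1 := by decide
        exact hg3 ▸ Nat.dvd_gcd h1 h2
    exact MonoidHom.mem_ker.mpr (orderOf_eq_one_iff.mp (Nat.dvd_one.mp hd))
  have hc1G : c1 ∈ G := Equiv.Perm.mem_alternatingGroup.mpr c1_sign
  have hc2G : c2 ∈ G := Equiv.Perm.mem_alternatingGroup.mpr c2_sign
  have hx1 : (⟨c1, hc1G⟩ : G) ^ 7 = 1 := by
    ext : 1
    push_cast
    exact c1_pow
  have hx2 : (⟨c2, hc2G⟩ : G) ^ 7 = 1 := by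
    ext : 1
    push_cast
    exact c2_pow
  have hτ : (⟨c1 * c2, c12_threeCycle.mem_alternatingGroup⟩ : G) ∈ φ.ker := by
    have he : (⟨c1 * c2, c12_threeCycle.mem_alternatingGroup⟩ : G) =
        (⟨c1, hc1G⟩ : G) * ⟨c2, hc2G⟩ := by ext : 1; rfl
    rw [he]
    exact mul_mem (key _ hx1) (key _ hx2)
  have h5 : 5 ≤ Fintype.card V := by rw [card_V]; omega
  have hNC := c12_threeCycle.alternating_normalClosure (by rwa [Nat.card_eq_fintype_card])
  have htop : (⊤ : Subgroup G) ≤ φ.ker := by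
    rw [← hNC]
    refine Subgroup.normalClosure_le_normal ?_
    rintro x hx
    rw [Set.mem_singleton_iff] at hx
    rw [hx]
    exact hτ
  have hKtop : K' = ⊤ := by
    rw [eq_top_iff]
    calc (⊤ : Subgroup G) ≤ φ.ker := htop
    _ = K'.normalCore := (Subgroup.normalCore_eq_ker K').symm
    _ ≤ K' := Subgroup.normalCore_le K'
  rw [hKtop, Subgroup.card_top, cardAlt] at hK'
  rcases hq with h | h <;> rw [h] at hK' <;> omega

end AffAux

theorem stmt19 :
    (∃ A : Subgroup (Equiv.Perm V),
      (A : Set (Equiv.Perm V)) = affSet ∧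
      Nat.card A = 1344 ∧
      A ≤ alternatingGroup V ∧ A ≠ alternatingGroup V ∧
      ∀ K : Subgroup (Equiv.Perm V),
        A ≤ K → K ≤ alternatingGroup V → K = A ∨ K = alternatingGroup V) ∧
    (∀ f ∈ affSet, Equiv.Perm.sign f = 1) ∧
    Nat.card (alternatingGroup V) = 20160 := by
  refine ⟨⟨AffAux.A, rfl, AffAux.card_A, ?_, ?_, ?_⟩, AffAux.sign_aff, AffAux.cardAlt⟩
  · intro f hf
    exact Equiv.Perm.mem_alternatingGroup.mpr (AffAux.sign_aff f hf)
  · intro h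
    have := AffAux.card_A
    rw [h, AffAux.cardAlt] at this
    omega
  · intro K hAK hKAlt
    have h1 : (1344 : ℕ) ∣ Nat.card K := AffAux.card_A ▸ Subgroup.card_dvd_of_le hAK
    have h2 : Nat.card K ∣ 20160 := AffAux.cardAlt ▸ Subgroup.card_dvd_of_le hKAlt
    obtain ⟨m, hm⟩ := h1
    have hm15 : m ∣ 15 := by
      have h3 : 1344 * m ∣ 1344 * 15 := by
        rw [← hm]; exact h2.trans (by norm_num)
      exact (mul_dvd_mul_iff_left (by norm_num : (1344 : ℕ) ≠ 0)).mp h3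
    have hmc : m = 1 ∨ m = 3 ∨ m = 5 ∨ m = 15 := by
      have hle := Nat.le_of_dvd (by norm_num) hm15
      interval_cases m <;> revert hm15 <;> decide
    rcases hmc with h | h | h | h
    · left
      have hcK : Nat.card K = 1344 := by subst h; omega
      exact (Subgroup.eq_of_le_of_card_ge hAK
        (le_of_eq (hcK.trans AffAux.card_A.symm))).symm
    · exact (AffAux.no_mid K hKAlt (Or.inl (by subst h; omega))).elim
    · exact (AffAux.no_mid K hKAlt (Or.inr (by subst h; omega))).elim
    · right
      have hcK : Nat.card K = 20160 := by subst h; omega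
      exact Subgroup.eq_of_le_of_card_ge hKAlt
        (le_of_eq (AffAux.cardAlt.trans hcK.symm))
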